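/- arXiv:0904.1256 — 5 statements merged into one kernel-verified Lean document; each statement's English description precedes it below -/
import Mathlib

section
/- Let a, b, k ∈ ℝ and let [·,·] be the unique skew-symmetric bilinear bracket on the real vector space with basis f, e₁, e₂, e₃ determined by [f,e₁] = −e₂, [f,e₂] = e₁, [f,e₃] = 0, [e₁,e₂] = −2b·e₃ − (k+a²+b²)·f, [e₁,e₃] = a·e₁ + b·e₂, [e₂,e₃] = −b·e₁ + a·e₂. Then [·,·] satisfies the Jacobi identity (i.e., defines a Lie algebra structure) if and only if a(k+a²+b²) = 0 and ab = 0. -/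
/-!
STATEMENT 7: Let `a, b, k ∈ ℝ` and let `[·,·]` be the skew-symmetric bilinear
bracket on the real vector space with basis `f, e₁, e₂, e₃` determined by
`[f,e₁] = −e₂`, `[f,e₂] = e₁`, `[f,e₃] = 0`,
`[e₁,e₂] = −2b·e₃ − (k+a²+b²)·f`, `[e₁,e₃] = a·e₁ + b·e₂`,
`[e₂,e₃] = −b·e₁ + a·e₂`. Then `[·,·]` satisfies the Jacobi identity iff
`a(k+a²+b²) = 0` and `ab = 0`.

We model the vector space as `Fin 4 → ℝ` with basis vectors
`f = ![1,0,0,0]`, `e₁ = ![0,1,0,0]`, `e₂ = ![0,0,1,0]`, `e₃ = ![0,0,0,1]`, and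
quantify over all skew-symmetric bilinear maps with the prescribed basis values
(there is exactly one such, being determined on a basis).
-/

/-- The basis vector `f`. -/
def bF : Fin 4 → ℝ := ![1, 0, 0, 0]

/-- The basis vector `e₁`. -/
def bE1 : Fin 4 → ℝ := ![0, 1, 0, 0]

/-- The basis vector `e₂`. -/
def bE2 : Fin 4 → ℝ := ![0, 0, 1, 0]

/-- The basis vector `e₃`. -/
def bE3 : Fin 4 → ℝ := ![0, 0, 0, 1]

lemma expand4 (x : Fin 4 → ℝ) :
    x = x 0 • bF + x 1 • bE1 + x 2 • bE2 + x 3 • bE3 := by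
  funext i
  fin_cases i <;> simp [bF, bE1, bE2, bE3]

set_option maxHeartbeats 1600000 in
theorem cartan_triple_bracket_jacobi_iff (a b k : ℝ)
    (B : (Fin 4 → ℝ) →ₗ[ℝ] (Fin 4 → ℝ) →ₗ[ℝ] (Fin 4 → ℝ))
    (hskew : ∀ x y, B x y = -B y x)
    (hfe1 : B bF bE1 = -bE2)
    (hfe2 : B bF bE2 = bE1)
    (hfe3 : B bF bE3 = 0)
    (he12 : B bE1 bE2 = (-2 * b) • bE3 + (-(k + a ^ 2 + b ^ 2)) • bF)
    (he13 : B bE1 bE3 = a • bE1 + b • bE2)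
    (he23 : B bE2 bE3 = (-b) • bE1 + a • bE2) :
    (∀ x y z : Fin 4 → ℝ, B (B x y) z + B (B y z) x + B (B z x) y = 0) ↔
      (a * (k + a ^ 2 + b ^ 2) = 0 ∧ a * b = 0) := by
  have hdiag : ∀ x, B x x = 0 := fun x => by
    have h := hskew x x
    have h2 : (2:ℝ) • B x x = 0 := by
      rw [two_smul]; nth_rewrite 1 [h]; abel
    simpa using (smul_eq_zero.mp h2).resolve_left (by norm_num)
  have h1f : B bE1 bF = bE2 := by rw [hskew, hfe1]; simp
  have h2f : B bE2 bF = -bE1 := by rw [hskew, hfe2]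
  have h3f : B bE3 bF = 0 := by rw [hskew, hfe3]; simp
  have h21 : B bE2 bE1 = -((-2 * b) • bE3 + (-(k + a ^ 2 + b ^ 2)) • bF) := by
    rw [hskew, he12]
  have h31 : B bE3 bE1 = -(a • bE1 + b • bE2) := by rw [hskew, he13]
  have h32 : B bE3 bE2 = -((-b) • bE1 + a • bE2) := by rw [hskew, he23]
  constructor
  · intro hJ
    have key := hJ bE1 bE2 bE3
    rw [he12, he23, h31] at key
    simp only [map_add, map_smul, map_neg, LinearMap.add_apply, LinearMap.smul_apply,
      LinearMap.neg_apply, hfe1, hfe2, hfe3, he12, he13, he23, h1f, h2f, h3f, h21, h31, h32,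
      hdiag] at key
    have k0 := congrFun key 0
    have k3 := congrFun key 3
    simp [bF, bE1, bE2, bE3] at k0 k3
    refine ⟨by nlinarith [k0], ?_⟩
    rcases k3 with h | h <;> simp [h]
  · rintro ⟨h1, h2⟩ x y z
    obtain ⟨c0, c1, c2, c3, rfl⟩ : ∃ c0 c1 c2 c3,
        x = c0 • bF + c1 • bE1 + c2 • bE2 + c3 • bE3 := ⟨_, _, _, _, expand4 x⟩
    obtain ⟨d0, d1, d2, d3, rfl⟩ : ∃ d0 d1 d2 d3,
        y = d0 • bF + d1 • bE1 + d2 • bE2 + d3 • bE3 := ⟨_, _, _, _, expand4 y⟩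
    obtain ⟨g0, g1, g2, g3, rfl⟩ : ∃ g0 g1 g2 g3,
        z = g0 • bF + g1 • bE1 + g2 • bE2 + g3 • bE3 := ⟨_, _, _, _, expand4 z⟩
    simp only [map_add, map_smul, LinearMap.add_apply, LinearMap.smul_apply,
      hfe1, hfe2, hfe3, he12, he13, he23, h1f, h2f, h3f, h21, h31, h32, hdiag,
      map_neg, LinearMap.neg_apply, smul_add, smul_neg, smul_smul, map_zero,
      LinearMap.zero_apply, smul_zero]
    rcases mul_eq_zero.mp h2 with ha | hb
    · subst ha
      funext i; fin_cases i <;> simp [bF, bE1, bE2, bE3] <;> ring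
    · subst hb
      rcases mul_eq_zero.mp h1 with ha | hK
      · subst ha
        funext i; fin_cases i <;> simp [bF, bE1, bE2, bE3] <;> ring
      · have hk : k = -a ^ 2 := by nlinarith [hK]
        subst hk
        funext i; fin_cases i <;> simp [bF, bE1, bE2, bE3] <;> ring
end

section
/- Let b, k ∈ ℝ with b ≠ 0, and let 𝔨 be the 4-dimensional real Lie algebra with basis f, e₁, e₂, e₃ and brackets [f,e₁] = −e₂, [f,e₂] = e₁, [f,e₃] = 0, [e₁,e₂] = −2b·e₃ − (k+b²)·f, [e₁,e₃] = b·e₂, [e₂,e₃] = −b·e₁. Then the center of 𝔨 is exactly the one-dimensional subspace spanned by e₃ − b·f. -/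
theorem cartan_lie_algebra_center_eq_span (b k : ℝ) (hb : b ≠ 0)
    (B : (Fin 4 → ℝ) →ₗ[ℝ] (Fin 4 → ℝ) →ₗ[ℝ] (Fin 4 → ℝ))
    (hskew : ∀ x y, B x y = -B y x)
    (hfe1 : B bF bE1 = -bE2)
    (hfe2 : B bF bE2 = bE1)
    (hfe3 : B bF bE3 = 0)
    (he12 : B bE1 bE2 = (-2 * b) • bE3 + (-(k + b ^ 2)) • bF)
    (he13 : B bE1 bE3 = b • bE2)
    (he23 : B bE2 bE3 = (-b) • bE1) :
    {z : Fin 4 → ℝ | ∀ x : Fin 4 → ℝ, B z x = 0} =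
      (Submodule.span ℝ {bE3 - b • bF} : Set (Fin 4 → ℝ)) := by
  have hself : ∀ x, B x x = 0 := by
    intro x
    funext i
    have h := congrFun (hskew x x) i
    simp only [Pi.neg_apply, Pi.zero_apply] at h ⊢
    linarith
  have hdecomp : ∀ v : Fin 4 → ℝ, v = v 0 • bF + v 1 • bE1 + v 2 • bE2 + v 3 • bE3 := by
    intro v; funext i; fin_cases i <;>
      simp [bF, bE1, bE2, bE3]
  have he1f : B bE1 bF = bE2 := by rw [hskew, hfe1]; simp
  have he2f : B bE2 bF = -bE1 := by rw [hskew, hfe2]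
  have he3f : B bE3 bF = 0 := by rw [hskew, hfe3]; simp
  have he21 : B bE2 bE1 = -((-2 * b) • bE3 + (-(k + b ^ 2)) • bF) := by rw [hskew, he12]
  have he31 : B bE3 bE1 = -(b • bE2) := by rw [hskew, he13]
  have he32 : B bE3 bE2 = -((-b) • bE1) := by rw [hskew, he23]
  have hform : ∀ v w : Fin 4 → ℝ, B v w =
      (v 0 • (w 1 • (-bE2) + w 2 • bE1)
      + v 1 • (w 0 • bE2 + w 2 • ((-2 * b) • bE3 + (-(k + b ^ 2)) • bF) + w 3 • (b • bE2))
      + v 2 • (w 0 • (-bE1) + w 1 • (-((-2 * b) • bE3 + (-(k + b ^ 2)) • bF)) + w 3 • ((-b) • bE1))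
      + v 3 • (w 1 • (-(b • bE2)) + w 2 • (-((-b) • bE1)))) := by
    intro v w
    conv_lhs => rw [hdecomp v, hdecomp w]
    simp only [map_add, map_smul, LinearMap.add_apply, LinearMap.smul_apply,
      hfe1, hfe2, hfe3, he12, he13, he23, he1f, he2f, he3f, he21, he31, he32, hself,
      smul_zero, add_zero, zero_add]
    module
  ext z
  simp only [Set.mem_setOf_eq, SetLike.mem_coe, Submodule.mem_span_singleton]
  constructor
  · intro h
    refine ⟨z 3, ?_⟩
    have h1 := congrFun (hform z bF ▸ h bF) 2
    have h2 := congrFun (hform z bF ▸ h bF) 1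
    have h3 := congrFun (hform z bE1 ▸ h bE1) 2
    simp [bF, bE1, bE2, bE3] at h1 h2 h3
    funext i
    fin_cases i <;> simp [bF, bE1, bE2, bE3, h1, h2] <;> linarith
  · rintro ⟨c, rfl⟩ x
    rw [hform]
    simp [bF, bE1, bE2, bE3]
    constructor <;> ring
end

section
/- Let b, k ∈ ℝ with b ≠ 0 and k > −b², and let 𝔨 be the 4-dimensional real Lie algebra with basis f, e₁, e₂, e₃ and brackets [f,e₁] = −e₂, [f,e₂] = e₁, [f,e₃] = 0, [e₁,e₂] = −2b·e₃ − (k+b²)·f, [e₁,e₃] = b·e₂, [e₂,e₃] = −b·e₁. Then the subspace 𝔰 = span(e₁, e₂, 2b·e₃ + (k+b²)·f) is a Lie subalgebra of 𝔨 that is transverse to ℝf (i.e., 𝔨 = 𝔰 ⊕ ℝf), and 𝔰 is isomorphic as a real Lie algebra to 𝔰𝔲(2), the Lie algebra of trace-zero skew-Hermitian 2×2 complex matrices. -/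
/-!
STATEMENT 9: Let `b, k ∈ ℝ` with `b ≠ 0` and `k > −b²`, and let `𝔨` be the
4-dimensional real Lie algebra with basis `f, e₁, e₂, e₃` and brackets
`[f,e₁] = −e₂`, `[f,e₂] = e₁`, `[f,e₃] = 0`, `[e₁,e₂] = −2b·e₃ − (k+b²)·f`,
`[e₁,e₃] = b·e₂`, `[e₂,e₃] = −b·e₁`. Then `𝔰 = span(e₁, e₂, 2b·e₃ + (k+b²)·f)`
is a Lie subalgebra of `𝔨` transverse to `ℝf` (i.e. `𝔨 = 𝔰 ⊕ ℝf`), and `𝔰` is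
isomorphic as a real Lie algebra to `𝔰𝔲(2)`.

We model `𝔨` as `Fin 4 → ℝ` with basis `f = ![1,0,0,0]`, `e₁ = ![0,1,0,0]`,
`e₂ = ![0,0,1,0]`, `e₃ = ![0,0,0,1]`, its bracket being the (unique)
skew-symmetric bilinear map with the prescribed basis values; `𝔰𝔲(2)` is the
real space of trace-zero skew-Hermitian `2×2` complex matrices, with the
commutator bracket.
-/

open Matrix

/-- `𝔰𝔲(2)`: the real subspace of trace-zero skew-Hermitian `2×2` complex
matrices. -/
noncomputable def su2 : Submodule ℝ (Matrix (Fin 2) (Fin 2) ℂ) where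
  carrier := {A | Aᴴ = -A ∧ A.trace = 0}
  add_mem' := by
    rintro A B ⟨hA, hA'⟩ ⟨hB, hB'⟩
    constructor
    · rw [Matrix.conjTranspose_add, hA, hB, neg_add]
    · rw [Matrix.trace_add, hA', hB', add_zero]
  zero_mem' := by simp
  smul_mem' := by
    rintro c A ⟨hA, hA'⟩
    constructor
    · rw [Matrix.conjTranspose_smul, hA, star_trivial, smul_neg]
    · rw [Matrix.trace_smul, hA', smul_zero]

/-- Auxiliary matrix `r • (-(i/2)σ₁)`. -/
noncomputable def M1mat (r : ℝ) : Matrix (Fin 2) (Fin 2) ℂ :=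
  !![0, -(r:ℂ)*Complex.I/2; -(r:ℂ)*Complex.I/2, 0]

/-- Auxiliary matrix `r • (-(i/2)σ₂)`. -/
noncomputable def M2mat (r : ℝ) : Matrix (Fin 2) (Fin 2) ℂ :=
  !![0, -(r:ℂ)/2; (r:ℂ)/2, 0]

/-- Auxiliary diagonal matrix `c • (iσ₃)`-type. -/
noncomputable def M3mat (c : ℝ) : Matrix (Fin 2) (Fin 2) ℂ :=
  !![(c:ℂ)*Complex.I, 0; 0, -((c:ℂ)*Complex.I)]

/-- The linear map `x ↦ x₁ • M₁ + x₂ • M₂ + x₃ • M₃`. -/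
noncomputable def phiAux (r c : ℝ) : (Fin 4 → ℝ) →ₗ[ℝ] Matrix (Fin 2) (Fin 2) ℂ :=
  (LinearMap.proj 1).smulRight (M1mat r) + (LinearMap.proj 2).smulRight (M2mat r)
    + (LinearMap.proj 3).smulRight (M3mat c)

lemma phiAux_apply (r c : ℝ) (x : Fin 4 → ℝ) :
    phiAux r c x = x 1 • M1mat r + x 2 • M2mat r + x 3 • M3mat c := rfl

lemma phiAux_eq (r c : ℝ) (x : Fin 4 → ℝ) : phiAux r c x =
    !![((x 3 * c : ℝ) : ℂ) * Complex.I,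
       -((x 1 * r : ℝ) : ℂ) * Complex.I / 2 - ((x 2 * r : ℝ) : ℂ) / 2;
       -((x 1 * r : ℝ) : ℂ) * Complex.I / 2 + ((x 2 * r : ℝ) : ℂ) / 2,
       -(((x 3 * c : ℝ) : ℂ) * Complex.I)] := by
  ext i j
  fin_cases i <;> fin_cases j <;>
    simp [phiAux, M1mat, M2mat, M3mat] <;> ring

lemma M1mat_mem (r : ℝ) : M1mat r ∈ su2 := by
  constructor
  · ext i j
    fin_cases i <;> fin_cases j <;>
      (simp [M1mat, Matrix.conjTranspose_apply, Complex.ext_iff]; try ring)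
  · simp [Matrix.trace_fin_two, M1mat]

lemma M2mat_mem (r : ℝ) : M2mat r ∈ su2 := by
  constructor
  · ext i j
    fin_cases i <;> fin_cases j <;>
      (simp [M2mat, Matrix.conjTranspose_apply, Complex.ext_iff]; try ring)
  · simp [Matrix.trace_fin_two, M2mat]

lemma M3mat_mem (c : ℝ) : M3mat c ∈ su2 := by
  constructor
  · ext i j
    fin_cases i <;> fin_cases j <;>
      (simp [M3mat, Matrix.conjTranspose_apply, Complex.ext_iff]; try ring)
  · simp [Matrix.trace_fin_two, M3mat]

set_option maxHeartbeats 1600000 in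
theorem cartan_s_subalgebra_transverse_iso_su2 (b k : ℝ) (hb : b ≠ 0) (hk : k > -b ^ 2)
    (B : (Fin 4 → ℝ) →ₗ[ℝ] (Fin 4 → ℝ) →ₗ[ℝ] (Fin 4 → ℝ))
    (hskew : ∀ x y, B x y = -B y x)
    (hfe1 : B bF bE1 = -bE2)
    (hfe2 : B bF bE2 = bE1)
    (hfe3 : B bF bE3 = 0)
    (he12 : B bE1 bE2 = (-2 * b) • bE3 + (-(k + b ^ 2)) • bF)
    (he13 : B bE1 bE3 = b • bE2)
    (he23 : B bE2 bE3 = (-b) • bE1) :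
    ∀ s : Submodule ℝ (Fin 4 → ℝ),
      s = Submodule.span ℝ {bE1, bE2, (2 * b) • bE3 + (k + b ^ 2) • bF} →
      (∀ u ∈ s, ∀ v ∈ s, B u v ∈ s) ∧
      s ⊔ Submodule.span ℝ {bF} = ⊤ ∧
      s ⊓ Submodule.span ℝ {bF} = ⊥ ∧
      ∃ φ : (Fin 4 → ℝ) →ₗ[ℝ] Matrix (Fin 2) (Fin 2) ℂ,
        Set.InjOn φ s ∧
        Submodule.map φ s = su2 ∧
        ∀ u ∈ s, ∀ v ∈ s, φ (B u v) = φ u * φ v - φ v * φ u := by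
  intro s hs
  set c : ℝ := k + b ^ 2 with hc
  have hcpos : 0 < c := by nlinarith
  set m : ℝ := k + 3 * b ^ 2 with hmdef
  have hmpos : 0 < m := by nlinarith
  have hdecomp : ∀ x : Fin 4 → ℝ,
      x = x 0 • bF + x 1 • bE1 + x 2 • bE2 + x 3 • bE3 := by
    intro x; funext i; fin_cases i <;> simp [bF, bE1, bE2, bE3]
  have hBxx : ∀ x, B x x = 0 := by
    intro x
    have h2 : B x x + B x x = 0 := by
      nth_rewrite 1 [hskew x x]; exact neg_add_cancel _
    have h3 : (2 : ℝ) • B x x = 0 := by rw [two_smul]; exact h2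
    simpa using h3
  have he1f : B bE1 bF = bE2 := by rw [hskew, hfe1]; simp
  have he2f : B bE2 bF = -bE1 := by rw [hskew, hfe2]
  have he3f : B bE3 bF = 0 := by rw [hskew, hfe3]; simp
  have he21 : B bE2 bE1 = -((-2 * b) • bE3 + (-c) • bF) := by rw [hskew, he12]
  have he31 : B bE3 bE1 = -(b • bE2) := by rw [hskew, he13]
  have he32 : B bE3 bE2 = -((-b) • bE1) := by rw [hskew, he23]
  -- explicit formula for the bracket
  have hB : ∀ u v : Fin 4 → ℝ, B u v =
      ![-c * (u 1 * v 2 - u 2 * v 1),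
        (u 0 * v 2 - u 2 * v 0) - b * (u 2 * v 3 - u 3 * v 2),
        -(u 0 * v 1 - u 1 * v 0) + b * (u 1 * v 3 - u 3 * v 1),
        -2 * b * (u 1 * v 2 - u 2 * v 1)] := by
    intro u v
    nth_rewrite 1 [hdecomp u, hdecomp v]
    simp only [map_add, LinearMap.add_apply, LinearMap.map_smul, LinearMap.smul_apply,
      hfe1, hfe2, hfe3, he12, he13, he23, he1f, he2f, he3f, he21, he31, he32, hBxx]
    funext i
    fin_cases i <;> simp [bF, bE1, bE2, bE3] <;> ring
  -- membership characterization for s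
  have hmem : ∀ x : Fin 4 → ℝ, x ∈ s ↔ 2 * b * x 0 = c * x 3 := by
    intro x
    rw [hs]
    constructor
    · intro hx
      induction hx using Submodule.span_induction with
      | mem y hy =>
        simp only [Set.mem_insert_iff, Set.mem_singleton_iff] at hy
        rcases hy with rfl | rfl | rfl
        · simp [bE1]
        · simp [bE2]
        · show 2 * b * ((2 * b) • bE3 + c • bF) 0 = c * ((2 * b) • bE3 + c • bF) 3
          simp [bE3, bF]
          ring
      | zero => simp
      | add y z _ _ hy hz =>
        simp only [Pi.add_apply]
        linear_combination hy + hz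
      | smul t y _ hy =>
        simp only [Pi.smul_apply, smul_eq_mul]
        linear_combination t * hy
    · intro hx
      have hw : (2 * b) • bE3 + c • bF ∈
          Submodule.span ℝ {bE1, bE2, (2 * b) • bE3 + c • bF} :=
        Submodule.subset_span (by simp)
      have h1 : bE1 ∈ Submodule.span ℝ {bE1, bE2, (2 * b) • bE3 + c • bF} :=
        Submodule.subset_span (by simp)
      have h2 : bE2 ∈ Submodule.span ℝ {bE1, bE2, (2 * b) • bE3 + c • bF} :=
        Submodule.subset_span (by simp)
      have hx0 : x 0 = c * x 3 / (2 * b) := by field_simp; linarith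
      have hxeq : x = x 1 • bE1 + x 2 • bE2 + (x 3 / (2 * b)) • ((2 * b) • bE3 + c • bF) := by
        funext i
        fin_cases i <;> simp [bF, bE1, bE2, bE3] <;> field_simp <;> linarith [hx0]
      rw [hxeq]
      exact Submodule.add_mem _ (Submodule.add_mem _ (Submodule.smul_mem _ _ h1)
        (Submodule.smul_mem _ _ h2)) (Submodule.smul_mem _ _ hw)
  refine ⟨?_, ?_, ?_, ?_⟩
  · -- closure under bracket
    intro u hu v hv
    rw [hmem, hB]
    show 2 * b * (-c * (u 1 * v 2 - u 2 * v 1)) = c * (-2 * b * (u 1 * v 2 - u 2 * v 1))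
    ring
  · -- sup = top
    rw [eq_top_iff]
    intro x _
    have hy : (x - (x 0 - c * x 3 / (2 * b)) • bF) ∈ s := by
      rw [hmem]
      simp only [Pi.sub_apply, Pi.smul_apply, smul_eq_mul]
      simp [bF]
      field_simp
      try ring
    have hz : (x 0 - c * x 3 / (2 * b)) • bF ∈ Submodule.span ℝ ({bF} : Set _) :=
      Submodule.smul_mem _ _ (Submodule.subset_span rfl)
    have h := Submodule.add_mem_sup hy hz
    simpa using h
  · -- inf = bot
    rw [eq_bot_iff]
    intro x hx
    rw [Submodule.mem_inf] at hx
    obtain ⟨hx1, hx2⟩ := hx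
    rw [Submodule.mem_span_singleton] at hx2
    obtain ⟨t, rfl⟩ := hx2
    rw [hmem] at hx1
    simp [bF] at hx1
    rcases hx1 with h | h
    · exact absurd h hb
    · simp [h]
  · -- the isomorphism with su(2)
    set r : ℝ := Real.sqrt m with hrdef
    have hr2 : r ^ 2 = m := Real.sq_sqrt hmpos.le
    have hrpos : 0 < r := Real.sqrt_pos.mpr hmpos
    have hr : r ≠ 0 := ne_of_gt hrpos
    have hc4 : m / (4 * b) ≠ 0 := by
      apply div_ne_zero (ne_of_gt hmpos)
      simpa using hb
    refine ⟨phiAux r (m / (4 * b)), ?_, ?_, ?_⟩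
    · -- injectivity on s
      intro x hx y hy hxy
      have hx' := (hmem x).mp hx
      have hy' := (hmem y).mp hy
      rw [phiAux_eq, phiAux_eq] at hxy
      have h01 := congrFun (congrFun hxy 0) 1
      have h00 := congrFun (congrFun hxy 0) 0
      simp [Complex.ext_iff] at h01 h00
      obtain ⟨ha, hb'⟩ := h01
      have e1 : x 1 = y 1 := mul_right_cancel₀ hr (by exact hb'.elim (fun h => by rw [h]) (fun h => absurd h hr) : x 1 * r = y 1 * r)
      have e2 : x 2 = y 2 := mul_right_cancel₀ hr (by exact ha.elim (fun h => by rw [h]) (fun h => absurd h hr) : x 2 * r = y 2 * r)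
      have e3 : x 3 = y 3 := by
        rcases h00 with h | h
        · exact h
        · exfalso
          rcases h with h | h
          · exact (ne_of_gt hmpos) h
          · exact hb h
      have e0 : x 0 = y 0 := by
        have h2b : (2 : ℝ) * b ≠ 0 := by simpa using hb
        apply mul_left_cancel₀ h2b
        rw [hx', hy', e3]
      funext i
      fin_cases i
      · exact e0
      · exact e1
      · exact e2
      · exact e3
    · -- image is su(2)
      apply le_antisymm
      · rintro A ⟨x, hx, rfl⟩
        rw [phiAux_apply]
        exact Submodule.add_mem _ (Submodule.add_mem _
          (Submodule.smul_mem _ _ (M1mat_mem r)) (Submodule.smul_mem _ _ (M2mat_mem r)))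
          (Submodule.smul_mem _ _ (M3mat_mem _))
      · intro A hA
        obtain ⟨hA1, hA2⟩ := hA
        set t : ℝ := (A 0 0).im / (m / (4 * b)) with ht
        refine ⟨![c * t / (2 * b), -2 * (A 0 1).im / r, -2 * (A 0 1).re / r, t], ?_, ?_⟩
        · exact (hmem _).mpr (by
            show 2 * b * (c * t / (2 * b)) = c * t
            field_simp)
        · have h00 := congrFun (congrFun hA1 0) 0
          have h10 := congrFun (congrFun hA1 0) 1
          simp [Matrix.conjTranspose_apply] at h00 h10
          have hre00 : (A 0 0).re = 0 := by
            have h := congrArg Complex.re h00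
            simp at h
            linarith
          have htr : A 0 0 + A 1 1 = 0 := by
            rw [Matrix.trace_fin_two] at hA2; exact hA2
          have h10' : A 1 0 = -(starRingEnd ℂ) (A 0 1) := by
            have h := congrArg (starRingEnd ℂ) h10
            simpa using h
          rw [phiAux_eq]
          ext i j
          fin_cases i <;> fin_cases j
          · show ((t * (m / (4 * b)) : ℝ) : ℂ) * Complex.I = A 0 0
            rw [ht, div_mul_cancel₀ _ hc4]
            apply Complex.ext <;> simp [hre00]
          · show -(((-2 * (A 0 1).im / r) * r : ℝ) : ℂ) * Complex.I / 2
                - (((-2 * (A 0 1).re / r) * r : ℝ) : ℂ) / 2 = A 0 1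
            rw [div_mul_cancel₀ _ hr, div_mul_cancel₀ _ hr]
            apply Complex.ext <;> (simp; try ring)
          · show -(((-2 * (A 0 1).im / r) * r : ℝ) : ℂ) * Complex.I / 2
                + (((-2 * (A 0 1).re / r) * r : ℝ) : ℂ) / 2 = A 1 0
            rw [div_mul_cancel₀ _ hr, div_mul_cancel₀ _ hr, h10']
            apply Complex.ext <;> (simp; try ring)
          · show -(((t * (m / (4 * b)) : ℝ) : ℂ) * Complex.I) = A 1 1
            rw [ht, div_mul_cancel₀ _ hc4]
            have h11 : A 1 1 = -(A 0 0) := by linear_combination htr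
            rw [h11]
            apply Complex.ext <;> simp [hre00]
    · -- Lie algebra homomorphism on s
      intro u hu v hv
      have hu' : u 0 = c * u 3 / (2 * b) := by
        have h := (hmem u).mp hu; field_simp; linarith
      have hv' : v 0 = c * v 3 / (2 * b) := by
        have h := (hmem v).mp hv; field_simp; linarith
      have hbC : (b : ℂ) ≠ 0 := by exact_mod_cast hb
      have hkC : (k : ℂ) = (r : ℂ) ^ 2 - 3 * (b : ℂ) ^ 2 := by
        have h : k = r ^ 2 - 3 * b ^ 2 := by rw [hr2]; rw [hmdef]; ring
        exact_mod_cast congrArg (Complex.ofReal) h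
      rw [hB u v, phiAux_eq, phiAux_eq, phiAux_eq, Matrix.mul_fin_two, Matrix.mul_fin_two]
      rw [hu', hv']
      ext i j
      fin_cases i <;> fin_cases j <;>
        (simp [Matrix.cons_val_zero, Matrix.cons_val_one, Matrix.head_cons]
         simp only [hc, hmdef]
         push_cast
         rw [hkC]
         field_simp
         ring_nf
         all_goals simp only [Complex.I_sq]
         all_goals ring_nf)
end

section
/- Let b, k ∈ ℝ with b ≠ 0 and k > −b², and let 𝔨 be the 4-dimensional real Lie algebra with basis f, e₁, e₂, e₃ and brackets [f,e₁] = −e₂, [f,e₂] = e₁, [f,e₃] = 0, [e₁,e₂] = −2b·e₃ − (k+b²)·f, [e₁,e₃] = b·e₂, [e₂,e₃] = −b·e₁. Then there is an isomorphism of real Lie algebras φ : 𝔨 → 𝔲(2) onto the Lie algebra of skew-Hermitian 2×2 complex matrices, which carries the subalgebra 𝔰 = span(e₁, e₂, 2b·e₃ + (k+b²)·f) onto 𝔰𝔲(2). -/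
/-!
STATEMENT 10: Let `b, k ∈ ℝ` with `b ≠ 0` and `k > −b²`, and let `𝔨` be the
4-dimensional real Lie algebra with basis `f, e₁, e₂, e₃` and brackets
`[f,e₁] = −e₂`, `[f,e₂] = e₁`, `[f,e₃] = 0`, `[e₁,e₂] = −2b·e₃ − (k+b²)·f`,
`[e₁,e₃] = b·e₂`, `[e₂,e₃] = −b·e₁`. Then there is an isomorphism of real Lie
algebras `φ : 𝔨 → 𝔲(2)` onto the skew-Hermitian `2×2` complex matrices carrying
`𝔰 = span(e₁, e₂, 2b·e₃ + (k+b²)·f)` onto `𝔰𝔲(2)`.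

We model `𝔨` as `Fin 4 → ℝ` with basis `f = ![1,0,0,0]`, `e₁ = ![0,1,0,0]`,
`e₂ = ![0,0,1,0]`, `e₃ = ![0,0,0,1]`, its bracket being the (unique)
skew-symmetric bilinear map with the prescribed basis values; `𝔲(2)` (resp.
`𝔰𝔲(2)`) is the real space of skew-Hermitian (resp. trace-zero skew-Hermitian)
`2×2` complex matrices with the commutator bracket.
-/

open Matrix

/-- `𝔲(2)`: the real subspace of skew-Hermitian `2×2` complex matrices. -/
noncomputable def u2 : Submodule ℝ (Matrix (Fin 2) (Fin 2) ℂ) where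
  carrier := {A | Aᴴ = -A}
  add_mem' := by
    rintro A B hA hB
    show _ᴴ = _
    rw [Matrix.conjTranspose_add, hA, hB, neg_add]
  zero_mem' := by simp
  smul_mem' := by
    rintro c A hA
    show _ᴴ = _
    rw [Matrix.conjTranspose_smul, hA, star_trivial, smul_neg]

noncomputable def Mmat (b d p : ℝ) : (Fin 4 → ℝ) →ₗ[ℝ] Matrix (Fin 2) (Fin 2) ℂ where
  toFun x := !![((x 0 * (3/2) + x 3 * (b/2 - d) : ℝ) : ℂ) * Complex.I,
                ((p/2 : ℝ) : ℂ) * ((x 2 : ℝ) + (x 1 : ℝ) * Complex.I);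
                ((p/2 : ℝ) : ℂ) * (-(x 2 : ℝ) + (x 1 : ℝ) * Complex.I),
                ((x 0 * (1/2) + x 3 * (-(b/2) - d) : ℝ) : ℂ) * Complex.I]
  map_add' x y := by
    ext i j
    fin_cases i <;> fin_cases j <;> simp <;> ring
  map_smul' r x := by
    ext i j
    fin_cases i <;> fin_cases j <;> simp <;> ring

lemma mem_u2_iff (A : Matrix (Fin 2) (Fin 2) ℂ) : A ∈ u2 ↔ Aᴴ = -A := Iff.rfl

lemma mem_su2_iff (A : Matrix (Fin 2) (Fin 2) ℂ) : A ∈ su2 ↔ Aᴴ = -A ∧ A.trace = 0 := Iff.rfl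

set_option maxHeartbeats 1000000 in
lemma Mmat_comm (b d p c : ℝ) (hcd : c = 2*b*d) (hp2 : p^2 = c + 2*b^2)
    (x y : Fin 4 → ℝ) :
    Mmat b d p ![-c*(x 1*y 2 - x 2*y 1),
                 (x 0*y 2 - x 2*y 0) - b*(x 2*y 3 - x 3*y 2),
                 -(x 0*y 1 - x 1*y 0) + b*(x 1*y 3 - x 3*y 1),
                 -2*b*(x 1*y 2 - x 2*y 1)] =
      Mmat b d p x * Mmat b d p y - Mmat b d p y * Mmat b d p x := by
  subst hcd
  have hp2c : ((p:ℂ))^2 = 2*(b:ℂ)*(d:ℂ) + 2*(b:ℂ)^2 := by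
    exact_mod_cast congrArg (Complex.ofReal) hp2
  ext i j
  fin_cases i <;> fin_cases j <;>
    simp [Mmat, Matrix.mul_apply, Fin.sum_univ_two] <;>
    ring_nf <;> (try rw [Complex.I_sq]) <;> ring_nf <;>
    (try rw [hp2c]) <;> (try ring)

lemma Mmat_mem_u2 (b d p : ℝ) (x : Fin 4 → ℝ) : Mmat b d p x ∈ u2 := by
  show _ᴴ = _
  ext i j
  fin_cases i <;> fin_cases j <;>
    simp [Mmat, Matrix.conjTranspose_apply, Complex.ext_iff] <;> ring

lemma Mmat_inj (b d p : ℝ) (hp : p ≠ 0) (hbd : b + d ≠ 0) :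
    Function.Injective (Mmat b d p) := by
  rw [injective_iff_map_eq_zero]
  intro x hx
  have h01 := congrFun (congrFun hx 0) 1
  have h00 := congrFun (congrFun hx 0) 0
  have h11 := congrFun (congrFun hx 1) 1
  simp [Mmat, Complex.ext_iff] at h01 h00 h11
  obtain ⟨hx2, hx1⟩ := h01.resolve_left hp
  have hx3 : x 3 = 0 := by
    have h : x 3 * (2*(b+d)) = 0 := by linear_combination h00 - 3 * h11
    rcases mul_eq_zero.mp h with h | h
    · exact h
    · exact absurd (by linarith : b + d = 0) hbd
  have hx0 : x 0 = 0 := by linear_combination 2 * h11 + (b + 2*d) * hx3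
  funext i; fin_cases i <;> simp [hx0, hx1, hx2, hx3]

set_option maxHeartbeats 2000000 in
lemma Mmat_surj (b d p : ℝ) (hp : p ≠ 0) (hbd : b + d ≠ 0)
    (A : Matrix (Fin 2) (Fin 2) ℂ) (hA : Aᴴ = -A) :
    ∃ x : Fin 4 → ℝ, Mmat b d p x = A := by
  have h00 : (A 0 0).re = 0 := by
    have := congrFun (congrFun hA 0) 0
    simp [Matrix.conjTranspose_apply, Complex.ext_iff] at this
    linarith [this]
  have h11 : (A 1 1).re = 0 := by
    have := congrFun (congrFun hA 1) 1
    simp [Matrix.conjTranspose_apply, Complex.ext_iff] at this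
    linarith [this]
  have h10 : A 1 0 = -(starRingEnd ℂ) (A 0 1) := by
    have h := congrFun (congrFun hA 0) 1
    simp [Matrix.conjTranspose_apply] at h
    rw [← Complex.conj_conj (A 1 0), h, map_neg]
  set a := (A 0 0).im with ha
  set e := (A 1 1).im with he
  set u := (A 0 1).re with hu
  set v := (A 0 1).im with hv
  set x0 : ℝ := (a*(b/2+d) + e*(b/2-d))/(b+d) with hx0
  set x3 : ℝ := (a - 3*e)/(2*(b+d)) with hx3
  refine ⟨![x0, 2*v/p, 2*u/p, x3], ?_⟩
  have hA00 : A 0 0 = (a:ℂ)*Complex.I := by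
    rw [ha]; exact Complex.ext (by simpa using h00) (by simp)
  have hA11 : A 1 1 = (e:ℂ)*Complex.I := by
    rw [he]; exact Complex.ext (by simpa using h11) (by simp)
  have hA01 : A 0 1 = (u:ℂ) + (v:ℂ)*Complex.I := by
    rw [hu, hv]; exact Complex.ext (by simp) (by simp)
  have hbd' : (b:ℂ) + (d:ℂ) ≠ 0 := by exact_mod_cast hbd
  have hp' : (p:ℂ) ≠ 0 := by exact_mod_cast hp
  ext i j
  fin_cases i <;> fin_cases j <;>
    simp only [Mmat, LinearMap.coe_mk, AddHom.coe_mk, Matrix.cons_val', Matrix.cons_val_zero,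
      Matrix.cons_val_one, Matrix.head_cons, Matrix.head_fin_const, Matrix.empty_val',
      Matrix.cons_val_fin_one, Fin.isValue, Fin.zero_eta, Fin.mk_one, hA00, hA11, hA01, h10,
      map_add, _root_.map_mul, Complex.conj_ofReal, Complex.conj_I, hx0, hx3, Matrix.of_apply] <;>
    push_cast <;> field_simp <;> ring

set_option maxHeartbeats 4000000 in
theorem cartan_algebra_iso_u2_carrying_s_to_su2 (b k : ℝ) (hb : b ≠ 0) (hk : k > -b ^ 2)
    (B : (Fin 4 → ℝ) →ₗ[ℝ] (Fin 4 → ℝ) →ₗ[ℝ] (Fin 4 → ℝ))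
    (hskew : ∀ x y, B x y = -B y x)
    (hfe1 : B bF bE1 = -bE2)
    (hfe2 : B bF bE2 = bE1)
    (hfe3 : B bF bE3 = 0)
    (he12 : B bE1 bE2 = (-2 * b) • bE3 + (-(k + b ^ 2)) • bF)
    (he13 : B bE1 bE3 = b • bE2)
    (he23 : B bE2 bE3 = (-b) • bE1)
    (s : Submodule ℝ (Fin 4 → ℝ))
    (hs : s = Submodule.span ℝ {bE1, bE2, (2 * b) • bE3 + (k + b ^ 2) • bF}) :
    ∃ φ : (Fin 4 → ℝ) ≃ₗ[ℝ] u2,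
      (∀ u v : Fin 4 → ℝ,
        (φ (B u v) : Matrix (Fin 2) (Fin 2) ℂ) =
          (φ u : Matrix (Fin 2) (Fin 2) ℂ) * (φ v : Matrix (Fin 2) (Fin 2) ℂ) -
            (φ v : Matrix (Fin 2) (Fin 2) ℂ) * (φ u : Matrix (Fin 2) (Fin 2) ℂ)) ∧
      (fun u => (φ u : Matrix (Fin 2) (Fin 2) ℂ)) '' (s : Set (Fin 4 → ℝ)) =
        (su2 : Set (Matrix (Fin 2) (Fin 2) ℂ))  := by
  have hb2 : b + (k+b^2)/(2*b) ≠ 0 := by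
    intro h
    have : 2*b^2 + (k + b^2) = 0 := by field_simp at h; linarith
    nlinarith
  set c := k + b^2 with hc
  set d := c/(2*b) with hd
  have hcd : c = 2*b*d := by rw [hd]; field_simp
  have hbd : b + d ≠ 0 := hb2
  have hkp : c + 2*b^2 > 0 := by nlinarith
  set p := Real.sqrt (c + 2*b^2) with hpdef
  have hp2 : p^2 = c + 2*b^2 := Real.sq_sqrt hkp.le
  have hp : p ≠ 0 := by
    intro h; rw [h] at hp2; simp at hp2; nlinarith
  set M := Mmat b d p with hM
  -- basis decomposition and bracket computation
  have hzero : ∀ z, B z z = 0 := by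
    intro z
    have h := hskew z z
    have h2 : B z z + B z z = 0 := by nth_rewrite 2 [h]; simp
    rw [← two_smul ℝ] at h2
    exact (smul_eq_zero.mp h2).resolve_left (by norm_num)
  have he1f : B bE1 bF = bE2 := by rw [hskew, hfe1, neg_neg]
  have he2f : B bE2 bF = -bE1 := by rw [hskew, hfe2]
  have he3f : B bE3 bF = 0 := by rw [hskew, hfe3, neg_zero]
  have he21 : B bE2 bE1 = -((-2 * b) • bE3 + (-c) • bF) := by rw [hskew, he12]
  have he31 : B bE3 bE1 = -(b • bE2) := by rw [hskew, he13]
  have he32 : B bE3 bE2 = -((-b) • bE1) := by rw [hskew, he23]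
  have hB : ∀ x y : Fin 4 → ℝ, B x y =
      ![-c*(x 1*y 2 - x 2*y 1),
        (x 0*y 2 - x 2*y 0) - b*(x 2*y 3 - x 3*y 2),
        -(x 0*y 1 - x 1*y 0) + b*(x 1*y 3 - x 3*y 1),
        -2*b*(x 1*y 2 - x 2*y 1)] := by
    have hbasis : ∀ z : Fin 4 → ℝ, z 0 • bF + z 1 • bE1 + z 2 • bE2 + z 3 • bE3 = z := by
      intro z; funext i; fin_cases i <;> simp [bF, bE1, bE2, bE3]
    intro x y
    rw [← hbasis x, ← hbasis y]
    simp only [_root_.map_add, _root_.map_smul, LinearMap.add_apply, LinearMap.smul_apply,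
      hfe1, hfe2, hfe3, he12, he13, he23, hzero, he1f, he2f, he3f, he21, he31, he32]
    funext i
    fin_cases i <;>
      simp [bF, bE1, bE2, bE3, hbasis, Pi.add_apply, Pi.smul_apply] <;> ring
  have key : ∀ x y : Fin 4 → ℝ, M (B x y) = M x * M y - M y * M x := by
    intro x y
    rw [hB x y, hM]
    exact Mmat_comm b d p c hcd hp2 x y
  -- the linear equivalence
  let L : (Fin 4 → ℝ) →ₗ[ℝ] u2 := M.codRestrict u2 (Mmat_mem_u2 b d p)
  have hLbij : Function.Bijective L := by
    constructor
    · intro x y h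
      exact Mmat_inj b d p hp hbd (congrArg Subtype.val h)
    · rintro ⟨A, hA⟩
      obtain ⟨x, hx⟩ := Mmat_surj b d p hp hbd A hA
      exact ⟨x, Subtype.ext hx⟩
  let φ := LinearEquiv.ofBijective L hLbij
  have hφ : ∀ x, ((φ x : u2) : Matrix (Fin 2) (Fin 2) ℂ) = M x := fun _ => rfl
  refine ⟨φ, ?_, ?_⟩
  · intro u v
    rw [hφ, hφ, hφ]
    exact key u v
  · have hfun : (fun u => ((φ u : u2) : Matrix (Fin 2) (Fin 2) ℂ)) = ⇑M := funext hφ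
    have himg : Submodule.map M s = su2 := by
      rw [hs]
      apply le_antisymm
      · rw [Submodule.map_span, Submodule.span_le]
        rintro A ⟨x, hx, rfl⟩
        simp only [Set.mem_insert_iff, Set.mem_singleton_iff] at hx
        rcases hx with rfl | rfl | rfl
        · refine ⟨?_, ?_⟩
          · ext i j
            fin_cases i <;> fin_cases j <;>
              simp [hM, Mmat, bE1, Matrix.conjTranspose_apply, Complex.ext_iff]
          · simp [hM, Mmat, bE1, Matrix.trace, Matrix.diag, Fin.sum_univ_two]
        · refine ⟨?_, ?_⟩
          · ext i j
            fin_cases i <;> fin_cases j <;>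
              simp [hM, Mmat, bE2, Matrix.conjTranspose_apply, Complex.ext_iff]
          · simp [hM, Mmat, bE2, Matrix.trace, Matrix.diag, Fin.sum_univ_two]
        · refine ⟨?_, ?_⟩
          · ext i j
            fin_cases i <;> fin_cases j <;>
              simp [hM, Mmat, bE3, bF, Matrix.conjTranspose_apply, Complex.ext_iff]
          · have hb' : (b:ℂ) ≠ 0 := by exact_mod_cast hb
            simp [hM, Mmat, bE3, bF, Matrix.trace, Matrix.diag, Fin.sum_univ_two]
            have hcd' : (c:ℂ) = 2*(b:ℂ)*(d:ℂ) := by exact_mod_cast congrArg Complex.ofReal hcd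
            linear_combination (2*Complex.I) * hcd'
      · intro A hA
        obtain ⟨hA1, hA2⟩ := (mem_su2_iff A).mp hA
        have hb' : (b:ℂ) ≠ 0 := by exact_mod_cast hb
        have hbd' : (b:ℂ) + (d:ℂ) ≠ 0 := by exact_mod_cast hbd
        have hp' : (p:ℂ) ≠ 0 := by exact_mod_cast hp
        have h00 : (A 0 0).re = 0 := by
          have := congrFun (congrFun hA1 0) 0
          simp [Matrix.conjTranspose_apply, Complex.ext_iff] at this
          linarith [this]
        have h10 : A 1 0 = -(starRingEnd ℂ) (A 0 1) := by
          have h := congrFun (congrFun hA1 0) 1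
          simp [Matrix.conjTranspose_apply] at h
          rw [← Complex.conj_conj (A 1 0), h, map_neg]
        have htr : A 1 1 = -(A 0 0) := by
          have h : A 0 0 + A 1 1 = 0 := by
            simpa [Matrix.trace, Matrix.diag, Fin.sum_univ_two] using hA2
          linear_combination h
        set a := (A 0 0).im with ha
        set u := (A 0 1).re with hu
        set v := (A 0 1).im with hv
        have hA00 : A 0 0 = (a:ℂ)*Complex.I := by
          rw [ha]; exact Complex.ext (by simpa using h00) (by simp)
        have hA01 : A 0 1 = (u:ℂ) + (v:ℂ)*Complex.I := by
          rw [hu, hv]; exact Complex.ext (by simp) (by simp)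
        refine ⟨(2*v/p) • bE1 + (2*u/p) • bE2 +
          (a / (b*(b+d))) • ((2 * b) • bE3 + c • bF), ?_, ?_⟩
        · refine Submodule.add_mem _ (Submodule.add_mem _ ?_ ?_) ?_
          · exact Submodule.smul_mem _ _ (Submodule.subset_span (by simp))
          · exact Submodule.smul_mem _ _ (Submodule.subset_span (by simp))
          · exact Submodule.smul_mem _ _ (Submodule.subset_span (by simp))
        · ext i j
          fin_cases i <;> fin_cases j <;>
            simp only [hM, Mmat, LinearMap.coe_mk, AddHom.coe_mk, Matrix.cons_val',
              Matrix.cons_val_zero, Matrix.cons_val_one, Matrix.head_cons, Matrix.head_fin_const,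
              Matrix.empty_val', Matrix.cons_val_fin_one, Fin.isValue, Fin.zero_eta, Fin.mk_one,
              Pi.add_apply, Pi.smul_apply, bE1, bE2, bE3, bF, smul_eq_mul,
              hA00, hA01, h10, htr, hcd,
              map_add, _root_.map_mul, Complex.conj_ofReal, Complex.conj_I, Matrix.add_apply,
              Matrix.of_apply] <;>
            push_cast <;> field_simp <;> ring

    rw [hfun, ← Submodule.map_coe, himg]
end

section
/- For every inner product B on the 3-dimensional real vector space Im ℍ of purely imaginary quaternions, there exists a unit quaternion q such that the three vectors q·i·q⁻¹, q·j·q⁻¹, q·k·q⁻¹ are pairwise B-orthogonal. (Consequently every left-invariant Riemannian metric on the group S³ of unit quaternions is, in a suitably rotated Cartan coframe σ₁, σ₂, σ₃, of Milnor's diagonal form g_λ = 4((λ₂λ₃)⁻¹σ₁² + (λ₁λ₃)⁻¹σ₂² + (λ₁λ₂)⁻¹σ₃²).) -/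
/-!
STATEMENT 11: For every inner product `B` on the 3-dimensional real vector
space `Im ℍ` of purely imaginary quaternions, there exists a unit quaternion
`q` such that `q·i·q⁻¹`, `q·j·q⁻¹`, `q·k·q⁻¹` are pairwise `B`-orthogonal.
-/

open Quaternion

/-- The quaternion `i`. -/
def quatI : ℍ[ℝ] := ⟨0, 1, 0, 0⟩

/-- The quaternion `j`. -/
def quatJ : ℍ[ℝ] := ⟨0, 0, 1, 0⟩

/-- The quaternion `k`. -/
def quatK : ℍ[ℝ] := ⟨0, 0, 0, 1⟩


open RealInnerProductSpace


noncomputable def dIm (x y : ℍ[ℝ]) : ℝ := x.imI*y.imI + x.imJ*y.imJ + x.imK*y.imK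

noncomputable def reLm : ℍ[ℝ] →ₗ[ℝ] ℝ where
  toFun x := x.re
  map_add' x y := by simp
  map_smul' r x := by simp

noncomputable def Sre : Submodule ℝ ℍ[ℝ] := LinearMap.ker reLm

lemma mem_Sre {x : ℍ[ℝ]} : x ∈ Sre ↔ x.re = 0 := by
  simp [Sre, reLm, LinearMap.mem_ker, LinearMap.coe_mk, AddHom.coe_mk]
  rfl

lemma finrank_Sre : Module.finrank ℝ Sre = 3 := by
  have hsurj : Function.Surjective reLm := fun r => ⟨(r : ℍ[ℝ]), by simp [reLm]; rfl⟩
  have h := LinearMap.finrank_range_add_finrank_ker reLm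
  rw [LinearMap.range_eq_top.2 hsurj, finrank_top] at h
  have h4 : Module.finrank ℝ ℍ[ℝ] = 4 := Quaternion.finrank_eq_four
  have h1 : Module.finrank ℝ ℝ = 1 := Module.finrank_self ℝ
  show Module.finrank ℝ (LinearMap.ker reLm) = 3
  omega

lemma dIm_eq_inner (x y : ℍ[ℝ]) (hx : x.re = 0) (hy : y.re = 0) :
    dIm x y = ⟪x, y⟫ := by
  rw [Quaternion.inner_def]
  simp only [re_mul, re_star, imI_star, imJ_star, imK_star, hx, hy, dIm]
  ring

set_option maxHeartbeats 1000000 in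
lemma spectral (B : ℍ[ℝ] →ₗ[ℝ] ℍ[ℝ] →ₗ[ℝ] ℝ)
    (hsymm : ∀ x y : ℍ[ℝ], x.re = 0 → y.re = 0 → B x y = B y x) :
    ∃ u v w : ℍ[ℝ], u.re = 0 ∧ v.re = 0 ∧ w.re = 0 ∧
      dIm u u = 1 ∧ dIm v v = 1 ∧ dIm u v = 0 ∧
      B u v = 0 ∧ B u w = 0 ∧ B v w = 0 ∧
      (∀ z : ℍ[ℝ], z.re = 0 → dIm u z = 0 → dIm v z = 0 → ∃ c : ℝ, z = c • w) := by
  classical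
  obtain ⟨e, horth, hBe⟩ : ∃ e : OrthonormalBasis (Fin 3) ℝ Sre,
      Orthonormal ℝ e ∧ ∀ a b : Fin 3, a ≠ b → B (e a) (e b) = 0 := by
    set B' : Sre →ₗ[ℝ] Sre →ₗ[ℝ] ℝ := B.compl₁₂ Sre.subtype Sre.subtype with hB'
    have hTdef : ∃ T : Sre →ₗ[ℝ] Sre, ∀ x y : Sre, ⟪T x, y⟫ = B x y := by
      refine ⟨(InnerProductSpace.toDual ℝ Sre).symm.toLinearMap ∘ₗ
        (LinearMap.toContinuousLinearMap : (Sre →ₗ[ℝ] ℝ) ≃ₗ[ℝ] (Sre →L[ℝ] ℝ)).toLinearMap ∘ₗ B',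
        fun x y => ?_⟩
      have hx : ((InnerProductSpace.toDual ℝ Sre).symm.toLinearMap ∘ₗ
        (LinearMap.toContinuousLinearMap : (Sre →ₗ[ℝ] ℝ) ≃ₗ[ℝ] (Sre →L[ℝ] ℝ)).toLinearMap ∘ₗ B') x
          = (InnerProductSpace.toDual ℝ Sre).symm (LinearMap.toContinuousLinearMap (B' x)) := rfl
      rw [hx, InnerProductSpace.toDual_symm_apply]
      simp [hB', LinearMap.compl₁₂_apply]
    obtain ⟨T, hTapp⟩ := hTdef
    have hsymT : T.IsSymmetric := by
      intro x y
      rw [hTapp, real_inner_comm, hTapp]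
      exact hsymm _ _ (mem_Sre.1 x.2) (mem_Sre.1 y.2)
    refine ⟨hsymT.eigenvectorBasis finrank_Sre,
      (hsymT.eigenvectorBasis finrank_Sre).orthonormal, fun a b hab => ?_⟩
    rw [← hTapp, hsymT.apply_eigenvectorBasis finrank_Sre a, real_inner_smul_left,
      orthonormal_iff_ite.1 (hsymT.eigenvectorBasis finrank_Sre).orthonormal]
    simp [hab]
  have hre : ∀ a : Fin 3, ((e a : Sre) : ℍ[ℝ]).re = 0 := fun a => mem_Sre.1 (e a).2
  have hd : ∀ a b : Fin 3, dIm (e a) (e b) = if a = b then 1 else 0 := by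
    intro a b
    rw [dIm_eq_inner _ _ (hre a) (hre b), ← Submodule.coe_inner,
      orthonormal_iff_ite.1 horth]
  refine ⟨e 0, e 1, e 2, hre 0, hre 1, hre 2, (hd 0 0).trans (if_pos rfl), (hd 1 1).trans (if_pos rfl),
    (hd 0 1).trans (if_neg (by decide)), hBe 0 1 (by decide), hBe 0 2 (by decide), hBe 1 2 (by decide), ?_⟩
  intro z hz h0 h1
  set zS : Sre := ⟨z, mem_Sre.2 hz⟩ with hzS
  have hexp := e.sum_repr zS
  have hc0 : e.repr zS 0 = 0 := by
    rw [e.repr_apply_apply, Submodule.coe_inner, ← dIm_eq_inner _ _ (hre 0) hz]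
    exact h0
  have hc1 : e.repr zS 1 = 0 := by
    rw [e.repr_apply_apply, Submodule.coe_inner, ← dIm_eq_inner _ _ (hre 1) hz]
    exact h1
  refine ⟨e.repr zS 2, ?_⟩
  have h2 : zS = e.repr zS 2 • e 2 := by
    conv_lhs => rw [← hexp]
    rw [Fin.sum_univ_three, hc0, hc1, zero_smul, zero_smul, zero_add, zero_add]
  calc z = (zS : ℍ[ℝ]) := rfl
    _ = e.repr zS 2 • ((e 2 : Sre) : ℍ[ℝ]) := by rw [h2]; simp


lemma mxm (m x : ℍ[ℝ]) (hm : m.re = 0) (hx : x.re = 0) :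
    m * x * m = normSq m • x - (2 * dIm x m) • m := by
  ext <;> simp [dIm, normSq_def, hm, hx, re_mul, imI_mul, imJ_mul, imK_mul] <;> ring

lemma conj_formula (m x : ℍ[ℝ]) (hm : m.re = 0) (hm0 : m ≠ 0) (hx : x.re = 0) :
    m * x * m⁻¹ = ((2 * dIm x m) / normSq m) • m - x := by
  have hns : normSq m ≠ 0 := by simpa [normSq_eq_zero] using hm0
  have hstar : star m = -m := by ext <;> simp [hm]
  have hinv : m⁻¹ = (normSq m)⁻¹ • (-m) := by
    rw [Quaternion.inv_def, hstar]
  rw [hinv]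
  have h2 : m * x * ((normSq m)⁻¹ • (-m)) = (normSq m)⁻¹ • (-(m * x * m)) := by
    simp [mul_smul_comm, mul_neg]
  rw [h2, mxm m x hm hx, neg_sub, smul_sub, smul_smul, smul_smul,
    inv_mul_cancel₀ hns, one_smul]
  congr 1
  rw [div_eq_inv_mul]


lemma dIm_comm (x y : ℍ[ℝ]) : dIm x y = dIm y x := by unfold dIm; ring

lemma dIm_add_right (x y z : ℍ[ℝ]) : dIm x (y + z) = dIm x y + dIm x z := by
  simp [dIm]; ring

lemma dIm_neg_right (x y : ℍ[ℝ]) : dIm x (-y) = -dIm x y := by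
  simp [dIm]; ring

lemma normSq_of_im (x : ℍ[ℝ]) (hx : x.re = 0) : Quaternion.normSq x = dIm x x := by
  rw [Quaternion.normSq_def']
  simp [dIm, hx]
  ring

lemma ne_zero_of_dIm_one (x : ℍ[ℝ]) (hx : dIm x x = 1) : x ≠ 0 := by
  intro h
  rw [h] at hx
  simp [dIm] at hx

lemma re_mul_comm (a b : ℍ[ℝ]) : (a * b).re = (b * a).re := by
  simp only [Quaternion.re_mul]; ring

lemma re_conj (q x : ℍ[ℝ]) (hq : q ≠ 0) : (q * x * q⁻¹).re = x.re := by
  rw [mul_assoc, re_mul_comm, mul_assoc, inv_mul_cancel₀ hq, mul_one]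

lemma norm_conj (q x : ℍ[ℝ]) (hq : q ≠ 0) : ‖q * x * q⁻¹‖ = ‖x‖ := by
  rw [norm_mul, norm_mul, norm_inv]
  have h : ‖q‖ ≠ 0 := norm_ne_zero_iff.2 hq
  field_simp

lemma inner_conj (q x y : ℍ[ℝ]) (hq : q ≠ 0) :
    ⟪q * x * q⁻¹, q * y * q⁻¹⟫ = ⟪x, y⟫ := by
  have hadd : q * x * q⁻¹ + q * y * q⁻¹ = q * (x + y) * q⁻¹ := by
    rw [mul_add, add_mul]
  rw [real_inner_eq_norm_add_mul_self_sub_norm_mul_self_sub_norm_mul_self_div_two,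
    real_inner_eq_norm_add_mul_self_sub_norm_mul_self_sub_norm_mul_self_div_two x y,
    hadd, norm_conj _ _ hq, norm_conj _ _ hq, norm_conj _ _ hq]

lemma dIm_conj (q x y : ℍ[ℝ]) (hq : q ≠ 0) (hx : x.re = 0) (hy : y.re = 0) :
    dIm (q * x * q⁻¹) (q * y * q⁻¹) = dIm x y := by
  rw [dIm_eq_inner _ _ (by rw [re_conj _ _ hq]; exact hx) (by rw [re_conj _ _ hq]; exact hy),
    inner_conj _ _ _ hq, ← dIm_eq_inner x y hx hy]

lemma quatJ_ne_zero : quatJ ≠ 0 := by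
  intro h
  have := congrArg QuaternionAlgebra.imJ h
  simp [quatJ] at this

lemma quatI_comps : quatI.re = 0 ∧ quatI.imI = 1 ∧ quatI.imJ = 0 ∧ quatI.imK = 0 := ⟨rfl, rfl, rfl, rfl⟩

lemma quatJ_comps : quatJ.re = 0 ∧ quatJ.imI = 0 ∧ quatJ.imJ = 1 ∧ quatJ.imK = 0 := ⟨rfl, rfl, rfl, rfl⟩

lemma quatK_comps : quatK.re = 0 ∧ quatK.imI = 0 ∧ quatK.imJ = 0 ∧ quatK.imK = 1 := ⟨rfl, rfl, rfl, rfl⟩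

lemma step1 (u : ℍ[ℝ]) (hu : u.re = 0) (huu : dIm u u = 1) :
    ∃ q₁ : ℍ[ℝ], q₁ ≠ 0 ∧ q₁ * quatI * q₁⁻¹ = u := by
  have hIre : quatI.re = 0 := rfl
  by_cases hcase : u = -quatI
  · refine ⟨quatJ, quatJ_ne_zero, ?_⟩
    rw [conj_formula quatJ quatI rfl quatJ_ne_zero hIre]
    have hd : dIm quatI quatJ = 0 := by simp [dIm, quatI, quatJ]
    rw [hd, hcase]
    simp
  · set m : ℍ[ℝ] := quatI + u with hm
    have hmre : m.re = 0 := by simp [hm, quatI_comps, hu]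
    have hm0 : m ≠ 0 := by
      intro h
      rw [hm] at h
      exact hcase (eq_neg_of_add_eq_zero_right h)
    have hkey : 1 + u.imI ≠ 0 := by
      intro h
      apply hcase
      have h2 : u.imI*u.imI + u.imJ*u.imJ + u.imK*u.imK = 1 := huu
      have hJK : u.imJ*u.imJ + u.imK*u.imK = 0 := by linear_combination h2 - (u.imI - 1) * h
      have hJ : u.imJ = 0 := mul_self_eq_zero.1
        (le_antisymm (by nlinarith [mul_self_nonneg u.imK]) (mul_self_nonneg _))
      have hK : u.imK = 0 := mul_self_eq_zero.1
        (le_antisymm (by nlinarith [mul_self_nonneg u.imJ]) (mul_self_nonneg _))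
      ext <;> simp [quatI_comps, hu, hJ, hK] <;> linarith
    refine ⟨m, hm0, ?_⟩
    rw [conj_formula m quatI hmre hm0 hIre]
    have hd : dIm quatI m = 1 + u.imI := by simp [dIm, quatI_comps, hm]
    have hns : Quaternion.normSq m = 2 * (1 + u.imI) := by
      rw [normSq_of_im m hmre]
      simp only [dIm, hm, Quaternion.imI_add, Quaternion.imJ_add, Quaternion.imK_add]
      simp only [quatI]
      have h2 : u.imI*u.imI + u.imJ*u.imJ + u.imK*u.imK = 1 := huu
      linear_combination h2
    rw [hd, hns]
    rw [show (2 * (1 + u.imI)) / (2 * (1 + u.imI)) = 1 from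
      div_self (by intro h; apply hkey; linarith)]
    rw [one_smul, hm]
    abel

lemma step2 (u v v₁ : ℍ[ℝ]) (hu : u.re = 0) (hv : v.re = 0) (hv1 : v₁.re = 0)
    (huu : dIm u u = 1) (hvv : dIm v v = 1) (hv1v1 : dIm v₁ v₁ = 1) (huv : dIm u v = 0) (huv1 : dIm u v₁ = 0) :
    ∃ q₂ : ℍ[ℝ], q₂ ≠ 0 ∧ q₂ * u * q₂⁻¹ = u ∧ q₂ * v₁ * q₂⁻¹ = v := by
  have hv0 : v ≠ 0 := ne_zero_of_dIm_one v hvv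
  have hv10 : v₁ ≠ 0 := ne_zero_of_dIm_one v₁ hv1v1
  have hvconj : v * u * v⁻¹ = -u := by
    rw [conj_formula v u hv hv0 hu, huv]
    simp
  by_cases hcase : v₁ = -v
  · have hu0 : u ≠ 0 := ne_zero_of_dIm_one u huu
    refine ⟨u, hu0, ?_, ?_⟩
    · rw [mul_assoc, mul_inv_cancel₀ hu0, mul_one]
    · rw [conj_formula u v₁ hu hu0 hv1]
      have hd : dIm v₁ u = 0 := by rw [dIm_comm]; exact huv1
      rw [hd, hcase]
      simp
  · set m : ℍ[ℝ] := v₁ + v with hm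
    have hmre : m.re = 0 := by rw [hm]; simp [hv1, hv]
    have hm0 : m ≠ 0 := by
      intro h
      rw [hm] at h
      exact hcase (eq_neg_of_add_eq_zero_left h)
    refine ⟨v * m, mul_ne_zero hv0 hm0, ?_, ?_⟩ <;>
      rw [mul_inv_rev, show ∀ x : ℍ[ℝ], v * m * x * (m⁻¹ * v⁻¹) = v * (m * x * m⁻¹) * v⁻¹ from
        fun x => by noncomm_ring]
    · have h1 : m * u * m⁻¹ = -u := by
        rw [conj_formula m u hmre hm0 hu]
        have hd : dIm u m = 0 := by rw [hm, dIm_add_right, huv, huv1]; norm_num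
        rw [hd]
        simp
      rw [h1, show v * -u * v⁻¹ = -(v * u * v⁻¹) from by noncomm_ring, hvconj, neg_neg]
    · have h1 : m * v₁ * m⁻¹ = v := by
        rw [conj_formula m v₁ hmre hm0 hv1]
        have hns : Quaternion.normSq m ≠ 0 := by
          simpa [Quaternion.normSq_eq_zero] using hm0
        have hd : dIm v₁ m = 1 + dIm v₁ v := by rw [hm, dIm_add_right, hv1v1]
        have hns2 : Quaternion.normSq m = 2 * (1 + dIm v₁ v) := by
          rw [normSq_of_im m hmre, hm]
          simp only [dIm, Quaternion.imI_add, Quaternion.imJ_add, Quaternion.imK_add]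
          have e1 : v₁.imI*v₁.imI + v₁.imJ*v₁.imJ + v₁.imK*v₁.imK = 1 := hv1v1
          have e2 : v.imI*v.imI + v.imJ*v.imJ + v.imK*v.imK = 1 := hvv
          linear_combination e1 + e2
        have h2plus : 2 * (1 + dIm v₁ v) ≠ 0 := by rw [← hns2]; exact hns
        rw [hd, hns2, div_self h2plus, one_smul, hm]
        abel
      rw [h1, mul_assoc, mul_inv_cancel₀ hv0, mul_one]

lemma quat_coe_ne_zero {c : ℝ} (hc : c ≠ 0) : (c : ℍ[ℝ]) ≠ 0 := by
  intro h
  have := congrArg QuaternionAlgebra.re h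
  simp at this
  exact hc this

lemma conj_real_smul (c : ℝ) (hc : c ≠ 0) (q x : ℍ[ℝ]) :
    (c • q) * x * (c • q)⁻¹ = q * x * q⁻¹ := by
  have h1 : (c • q) = (c : ℍ[ℝ]) * q := (Quaternion.coe_mul_eq_smul c q).symm
  have hcne : (c : ℍ[ℝ]) ≠ 0 := quat_coe_ne_zero hc
  rw [h1, mul_inv_rev]
  have h2 : (c : ℍ[ℝ]) * q * x * (q⁻¹ * (c : ℍ[ℝ])⁻¹) =
      (c : ℍ[ℝ]) * (q * x * q⁻¹) * (c : ℍ[ℝ])⁻¹ := by noncomm_ring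
  rw [h2, Quaternion.coe_commutes, mul_assoc, mul_inv_cancel₀ hcne, mul_one]

lemma myConj_mul (q x y : ℍ[ℝ]) (hq : q ≠ 0) :
    q * (x * y) * q⁻¹ = (q * x * q⁻¹) * (q * y * q⁻¹) := by
  have h : (q * x * q⁻¹) * (q * y * q⁻¹) = q * x * (q⁻¹ * q) * y * q⁻¹ := by noncomm_ring
  rw [h, inv_mul_cancel₀ hq, mul_one]
  noncomm_ring

lemma quatI_mul_quatJ : quatI * quatJ = quatK := by
  ext <;> simp [quatI_comps, quatJ_comps, quatK_comps, Quaternion.re_mul, Quaternion.imI_mul, Quaternion.imJ_mul, Quaternion.imK_mul]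


theorem exists_unit_quaternion_diagonalizing
    (B : ℍ[ℝ] →ₗ[ℝ] ℍ[ℝ] →ₗ[ℝ] ℝ)
    (hsymm : ∀ x y : ℍ[ℝ], x.re = 0 → y.re = 0 → B x y = B y x)
    (hpos : ∀ x : ℍ[ℝ], x.re = 0 → x ≠ 0 → 0 < B x x) :
    ∃ q : ℍ[ℝ], ‖q‖ = 1 ∧
      B (q * quatI * q⁻¹) (q * quatJ * q⁻¹) = 0 ∧
      B (q * quatI * q⁻¹) (q * quatK * q⁻¹) = 0 ∧
      B (q * quatJ * q⁻¹) (q * quatK * q⁻¹) = 0 := by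
  obtain ⟨u, v, w, hu, hv, hw, huu, hvv, huv, Buv, Buw, Bvw, hspan⟩ := spectral B hsymm
  obtain ⟨q₁, hq₁0, hq₁⟩ := step1 u hu huu
  set v₁ : ℍ[ℝ] := q₁ * quatJ * q₁⁻¹ with hv₁def
  have hv₁re : v₁.re = 0 := by rw [hv₁def, re_conj _ _ hq₁0]; rfl
  have hv₁v₁ : dIm v₁ v₁ = 1 := by
    rw [hv₁def, dIm_conj _ _ _ hq₁0 rfl rfl]
    simp [dIm, quatJ]
  have huv₁ : dIm u v₁ = 0 := by
    conv_lhs => rw [← hq₁]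
    rw [hv₁def, dIm_conj _ _ _ hq₁0 rfl rfl]
    simp [dIm, quatI, quatJ]
  obtain ⟨q₂, hq₂0, hq₂u, hq₂v⟩ := step2 u v v₁ hu hv hv₁re huu hvv hv₁v₁ huv huv₁
  set q₀ : ℍ[ℝ] := q₂ * q₁ with hq₀def
  have hq₀0 : q₀ ≠ 0 := mul_ne_zero hq₂0 hq₁0
  have hconj : ∀ x : ℍ[ℝ], q₀ * x * q₀⁻¹ = q₂ * (q₁ * x * q₁⁻¹) * q₂⁻¹ := by
    intro x
    rw [hq₀def, mul_inv_rev]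
    noncomm_ring
  have hqi : q₀ * quatI * q₀⁻¹ = u := by rw [hconj, hq₁, hq₂u]
  have hqj : q₀ * quatJ * q₀⁻¹ = v := by rw [hconj, ← hv₁def, hq₂v]
  have hqk : q₀ * quatK * q₀⁻¹ = u * v := by
    rw [← quatI_mul_quatJ, myConj_mul _ _ _ hq₀0, hqi, hqj]
  have hzre : (u * v).re = 0 := by
    have h2 : u.imI*v.imI + u.imJ*v.imJ + u.imK*v.imK = 0 := huv
    simp [Quaternion.re_mul, hu, hv]
    linarith
  have hd1 : dIm u (u * v) = 0 := by
    simp only [dIm, Quaternion.imI_mul, Quaternion.imJ_mul, Quaternion.imK_mul, hu, hv]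
    ring
  have hd2 : dIm v (u * v) = 0 := by
    simp only [dIm, Quaternion.imI_mul, Quaternion.imJ_mul, Quaternion.imK_mul, hu, hv]
    ring
  obtain ⟨c, hc⟩ := hspan (u * v) hzre hd1 hd2
  have hnq : ‖q₀‖ ≠ 0 := norm_ne_zero_iff.2 hq₀0
  refine ⟨‖q₀‖⁻¹ • q₀, ?_, ?_, ?_, ?_⟩
  · rw [norm_smul, Real.norm_eq_abs, abs_inv, abs_norm]
    exact inv_mul_cancel₀ hnq
  · rw [conj_real_smul _ (inv_ne_zero hnq), conj_real_smul _ (inv_ne_zero hnq), hqi, hqj]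
    exact Buv
  · rw [conj_real_smul _ (inv_ne_zero hnq), conj_real_smul _ (inv_ne_zero hnq), hqi, hqk,
      hc, map_smul, smul_eq_mul, Buw, mul_zero]
  · rw [conj_real_smul _ (inv_ne_zero hnq), conj_real_smul _ (inv_ne_zero hnq), hqj, hqk,
      hc, map_smul, smul_eq_mul, Bvw, mul_zero]
end
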